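/- Let (X, ‖·‖, ≼) be a normal partially ordered Banach space and D a nonempty closed bi-inductive subset of X. Let T be an isotone and δ-compact set-valued mapping from D to nonempty closed bounded subsets of D. Suppose there exist points x₀ ∈ D and x₁ ∈ T x₀ with x₀ ≼ x₁. Then the fixed point set 𝔉(T) = {x ∈ D : x ∈ T x} is a nonempty bi-chain-complete subset of D, and T has both an ≼-maximal and an ≼-minimal fixed point. (Theorem 3.6 (b), (b')) -/

import Mathlib

/-- The partial order on a Banach space induced by a cone `K`: `x ≼ y` iff `y - x ∈ K`. -/
def coneLe {X : Type*} [NormedAddCommGroup X] (K : Set X) (x y : X) : Prop := y - x ∈ K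

open Filter Topology Metric

section Helpers
variable {X : Type*} [NormedAddCommGroup X] {K : Set X}

lemma coneLe_refl (hK0 : (0 : X) ∈ K) (x : X) : coneLe K x x := by
  simpa [coneLe] using hK0

lemma coneLe_trans (hKadd : ∀ x ∈ K, ∀ y ∈ K, x + y ∈ K) {x y z : X}
    (h1 : coneLe K x y) (h2 : coneLe K y z) : coneLe K x z := by
  have := hKadd _ h2 _ h1
  simpa [coneLe, sub_add_sub_cancel] using this

lemma coneLe_of_tendsto (hKclosed : IsClosed K) {u v : ℕ → X} {a b : X}
    (hu : Tendsto u atTop (nhds a)) (hv : Tendsto v atTop (nhds b))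
    (h : ∀ᶠ n in atTop, coneLe K (u n) (v n)) : coneLe K a b :=
  hKclosed.mem_of_tendsto (hv.sub hu) h

lemma coneLe_neg {x y : X} : coneLe (-K) x y ↔ coneLe K y x := by
  simp [coneLe, Set.mem_neg, neg_sub]

/-- Monotone convergence: a monotone sequence in a relatively compact set converges
to a point which is an upper bound, when the cone is closed and normal. -/
lemma mono_tendsto (hKclosed : IsClosed K)
    (hnormal : ∃ l : ℝ, 0 < l ∧ ∀ x y : X, x ∈ K → y - x ∈ K → ‖x‖ ≤ l * ‖y‖)
    {S : Set X} (hS : IsCompact (closure S)) (u : ℕ → X) (hu : ∀ n, u n ∈ S)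
    (hmono : ∀ m n, m ≤ n → coneLe K (u m) (u n)) :
    ∃ p, Tendsto u atTop (nhds p) ∧ ∀ n, coneLe K (u n) p := by
  obtain ⟨l, hl, hnorm⟩ := hnormal
  have hucl : ∀ n, u n ∈ closure S := fun n => subset_closure (hu n)
  obtain ⟨p, _, φ, hφ, hconv⟩ := hS.tendsto_subseq hucl
  have hub : ∀ n, coneLe K (u n) p := by
    intro n
    refine coneLe_of_tendsto hKclosed (tendsto_const_nhds (x := u n)) hconv ?_
    filter_upwards [eventually_ge_atTop n] with k hk
    exact hmono n (φ k) (le_trans hk (hφ.le_apply))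
  refine ⟨p, ?_, hub⟩
  rw [Metric.tendsto_atTop]
  intro ε hε
  have hεl : 0 < ε / (l + 1) := by positivity
  obtain ⟨k, hk⟩ := (Metric.tendsto_atTop.mp hconv) (ε / (l + 1)) hεl
  refine ⟨φ k, fun n hn => ?_⟩
  have h1 : coneLe K (u (φ k)) (u n) := hmono _ _ hn
  have h2 : coneLe K (u n) p := hub n
  have key : ‖u n - u (φ k)‖ ≤ l * ‖p - u (φ k)‖ := by
    apply hnorm _ _ h1
    simpa [coneLe, sub_sub_sub_cancel_right] using h2
  have hd : dist (u (φ k)) p < ε / (l + 1) := hk k le_rfl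
  have : dist (u n) p ≤ dist (u n) (u (φ k)) + dist (u (φ k)) p := dist_triangle _ _ _
  have hdn : dist (u n) (u (φ k)) ≤ l * dist (u (φ k)) p := by
    rw [dist_eq_norm, dist_eq_norm]
    calc ‖u n - u (φ k)‖ ≤ l * ‖p - u (φ k)‖ := key
    _ = l * ‖u (φ k) - p‖ := by rw [norm_sub_rev]
  calc dist (u n) p ≤ l * dist (u (φ k)) p + dist (u (φ k)) p := by linarith
  _ = (l + 1) * dist (u (φ k)) p := by ring
  _ < (l + 1) * (ε / (l + 1)) := by
      apply mul_lt_mul_of_pos_left hd; linarith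
  _ = ε := by field_simp

end Helpers

section Helpers
variable {X : Type*} [NormedAddCommGroup X] {K : Set X}

open Classical in
/-- running maximum of a sequence along a chain -/
noncomputable def maxSeq (le : X → X → Prop) (c : ℕ → X) : ℕ → X
  | 0 => c 0
  | n + 1 => if le (maxSeq le c n) (c (n + 1)) then c (n + 1) else maxSeq le c n

lemma maxSeq_spec {C : Set X} (hK0 : (0 : X) ∈ K)
    (hKadd : ∀ x ∈ K, ∀ y ∈ K, x + y ∈ K)
    (hchain : IsChain (coneLe K) C) (c : ℕ → X) (hc : ∀ n, c n ∈ C) :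
    (∀ n, maxSeq (coneLe K) c n ∈ C) ∧
    (∀ m n, m ≤ n → coneLe K (maxSeq (coneLe K) c m) (maxSeq (coneLe K) c n)) ∧
    (∀ n, coneLe K (c n) (maxSeq (coneLe K) c n)) := by
  classical
  have htot : ∀ a ∈ C, ∀ b ∈ C, coneLe K a b ∨ coneLe K b a := by
    intro a ha b hb
    by_cases hab : a = b
    · exact Or.inl (hab ▸ coneLe_refl hK0 a)
    · exact hchain ha hb hab
  have hmem : ∀ n, maxSeq (coneLe K) c n ∈ C := by
    intro n; induction n with
    | zero => exact hc 0
    | succ n ih =>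
      rw [maxSeq]; split
      · exact hc (n + 1)
      · exact ih
  have hstep : ∀ n, coneLe K (maxSeq (coneLe K) c n) (maxSeq (coneLe K) c (n + 1)) := by
    intro n; rw [maxSeq]; split
    · assumption
    · exact coneLe_refl hK0 _
  have hmono : ∀ m n, m ≤ n → coneLe K (maxSeq (coneLe K) c m) (maxSeq (coneLe K) c n) := by
    intro m n hmn
    induction n with
    | zero => simp_all; exact hmn ▸ coneLe_refl hK0 _
    | succ n ih =>
      rcases Nat.lt_succ_iff_lt_or_eq.mp (Nat.lt_succ_of_le hmn) with h | h
      · exact coneLe_trans hKadd (ih (Nat.lt_succ_iff.mp h)) (hstep n)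
      · exact h ▸ coneLe_refl hK0 _
  refine ⟨hmem, hmono, ?_⟩
  intro n
  cases n with
  | zero => exact coneLe_refl hK0 _
  | succ n =>
    rw [maxSeq]; split
    · exact coneLe_refl hK0 _
    · next h => rcases htot _ (hc (n+1)) _ (hmem n) with h' | h'
                · exact h'
                · exact absurd h' h

end Helpers
section Helpers2
variable {X : Type*} [NormedAddCommGroup X] {K : Set X}

/-- If `uₙ → p`, `vₙ ∈ T uₙ`, `vₙ → p`, then `p` is a fixed point of `T`. -/
lemma mem_T_of_tendsto {D : Set X} {T : X → Set X}
    (hTval : ∀ x ∈ D, (T x).Nonempty ∧ IsClosed (T x) ∧ Bornology.IsBounded (T x) ∧ T x ⊆ D)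
    (hTcont : ∀ (u : ℕ → X) (p : X), (∀ n, u n ∈ D) → p ∈ D →
      Filter.Tendsto u Filter.atTop (nhds p) →
      Filter.Tendsto (fun n => Metric.hausdorffDist (T (u n)) (T p)) Filter.atTop (nhds 0))
    {u v : ℕ → X} {p : X} (hu : ∀ n, u n ∈ D) (hp : p ∈ D)
    (hul : Tendsto u atTop (nhds p)) (hv : ∀ n, v n ∈ T (u n))
    (hvl : Tendsto v atTop (nhds p)) : p ∈ T p := by
  have hd := hTcont u p hu hp hul
  have hfin : ∀ n, EMetric.hausdorffEdist (T (u n)) (T p) ≠ ⊤ := fun n =>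
    Metric.hausdorffEdist_ne_top_of_nonempty_of_bounded (hTval _ (hu n)).1 (hTval p hp).1
      (hTval _ (hu n)).2.2.1 (hTval p hp).2.2.1
  have key : ∀ n, infDist p (T p) ≤ dist p (v n) + hausdorffDist (T (u n)) (T p) := by
    intro n
    calc infDist p (T p) ≤ infDist (v n) (T p) + dist p (v n) :=
          infDist_le_infDist_add_dist
    _ ≤ hausdorffDist (T (u n)) (T p) + dist p (v n) := by
          gcongr; exact infDist_le_hausdorffDist_of_mem (hv n) (hfin n)
    _ = dist p (v n) + hausdorffDist (T (u n)) (T p) := by ring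
  have hdist0 : Tendsto (fun n => dist p (v n) + hausdorffDist (T (u n)) (T p))
      atTop (nhds 0) := by
    have h1 : Tendsto (fun n => dist p (v n)) atTop (nhds 0) := by
      simpa using ((tendsto_const_nhds (x := p)).dist hvl)
    simpa using h1.add hd
  have hle : infDist p (T p) ≤ 0 := ge_of_tendsto' hdist0 key
  have h0 : infDist p (T p) = 0 := le_antisymm hle infDist_nonneg
  exact ((hTval p hp).2.1.mem_iff_infDist_zero (hTval p hp).1).mpr h0

end Helpers2
section Helpers3
variable {X : Type*} [NormedAddCommGroup X] {K : Set X}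

/-- A bounded chain of fixed points has a least upper bound which is a fixed point. -/
lemma chain_sup (hKclosed : IsClosed K) (hK0 : (0 : X) ∈ K)
    (hKadd : ∀ x ∈ K, ∀ y ∈ K, x + y ∈ K)
    (hnormal : ∃ l : ℝ, 0 < l ∧ ∀ x y : X, x ∈ K → y - x ∈ K → ‖x‖ ≤ l * ‖y‖)
    {D : Set X} (hDclosed : IsClosed D) {T : X → Set X}
    (hTval : ∀ x ∈ D, (T x).Nonempty ∧ IsClosed (T x) ∧ Bornology.IsBounded (T x) ∧ T x ⊆ D)
    (hTcont : ∀ (u : ℕ → X) (p : X), (∀ n, u n ∈ D) → p ∈ D →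
      Filter.Tendsto u Filter.atTop (nhds p) →
      Filter.Tendsto (fun n => Metric.hausdorffDist (T (u n)) (T p)) Filter.atTop (nhds 0))
    {C : Set X} (hC : C ⊆ {x | x ∈ D ∧ x ∈ T x}) (hCne : C.Nonempty)
    (hchain : IsChain (coneLe K) C)
    (hcomp : IsCompact (closure (⋃ x ∈ C, T x))) :
    ∃ s, s ∈ D ∧ s ∈ T s ∧ (∀ c ∈ C, coneLe K c s) ∧
      ∀ b, (∀ c ∈ C, coneLe K c b) → coneLe K s b := by
  have hCD : C ⊆ D := fun x hx => (hC hx).1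
  have hCsub : C ⊆ ⋃ x ∈ C, T x := fun x hx => Set.mem_biUnion hx (hC hx).2
  -- a dense sequence in C
  have hsep : TopologicalSpace.IsSeparable C :=
    hcomp.isSeparable.mono (hCsub.trans subset_closure)
  haveI := hsep.separableSpace
  haveI : Nonempty C := hCne.to_subtype
  set c0 : ℕ → C := TopologicalSpace.denseSeq C with hc0
  set c : ℕ → X := fun n => (c0 n : X) with hcdef
  have hc : ∀ n, c n ∈ C := fun n => (c0 n).2
  have hdense : ∀ x ∈ C, x ∈ closure (Set.range c) := by
    intro x hx
    have h1 : (⟨x, hx⟩ : C) ∈ closure (Set.range c0) := by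
      rw [(TopologicalSpace.denseRange_denseSeq C).closure_range]; trivial
    have h2 : x ∈ Subtype.val '' closure (Set.range c0) := ⟨⟨x, hx⟩, h1, rfl⟩
    have h3 := image_closure_subset_closure_image
      (f := (Subtype.val : C → X)) continuous_subtype_val h2
    have : (Subtype.val : C → X) '' Set.range c0 = Set.range c := by
      rw [← Set.range_comp]; rfl
    rwa [this] at h3
  obtain ⟨hymem, hymono, hyc⟩ := maxSeq_spec hK0 hKadd hchain c hc
  set y := maxSeq (coneLe K) c with hy
  obtain ⟨p, hpl, hub⟩ := mono_tendsto hKclosed hnormal hcomp y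
    (fun n => hCsub (hymem n)) hymono
  have hpD : p ∈ D := hDclosed.mem_of_tendsto hpl
    (Filter.Eventually.of_forall fun n => hCD (hymem n))
  have hpT : p ∈ T p := mem_T_of_tendsto hTval hTcont
    (fun n => hCD (hymem n)) hpD hpl (fun n => (hC (hymem n)).2) hpl
  refine ⟨p, hpD, hpT, ?_, ?_⟩
  · intro x hx
    obtain ⟨w, hw, hwl⟩ := mem_closure_iff_seq_limit.mp (hdense x hx)
    refine coneLe_of_tendsto hKclosed hwl tendsto_const_nhds
      (Filter.Eventually.of_forall fun k => ?_)
    obtain ⟨j, hj⟩ := hw k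
    exact hj ▸ coneLe_trans hKadd (hyc j) (hub j)
  · intro b hb
    exact coneLe_of_tendsto hKclosed hpl tendsto_const_nhds
      (Filter.Eventually.of_forall fun n => hb _ (hymem n))

end Helpers3

section MonoHelper
variable {X : Type*} [NormedAddCommGroup X] {K : Set X}

lemma coneLe_mono_of_step (hK0 : (0 : X) ∈ K) (hKadd : ∀ x ∈ K, ∀ y ∈ K, x + y ∈ K)
    {u : ℕ → X} (h : ∀ n, coneLe K (u n) (u (n + 1))) :
    ∀ m n, m ≤ n → coneLe K (u m) (u n) := by
  intro m n hmn
  induction n, hmn using Nat.le_induction with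
  | base => exact coneLe_refl hK0 _
  | succ n hmn ih => exact coneLe_trans hKadd ih (h n)

end MonoHelper


/-- Theorem 3.6 (b), (b'): in a normal partially ordered Banach space, for an isotone,
δ-compact set-valued map `T` on a nonempty closed bi-inductive set `D`, with nonempty
closed bounded values in `D`, and with `x₀ ∈ D`, `x₁ ∈ T x₀`, `x₀ ≼ x₁`, the fixed point
set `𝔉(T)` is nonempty and bi-chain-complete, and `T` has both a maximal and a minimal
fixed point. -/
theorem setvalued_fixed_points_biChainComplete_of_normal
    {X : Type*} [NormedAddCommGroup X] [NormedSpace ℝ X] [CompleteSpace X]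
    (K : Set X) (hKclosed : IsClosed K) (hK0 : (0 : X) ∈ K)
    (hKadd : ∀ x ∈ K, ∀ y ∈ K, x + y ∈ K)
    (hKsmul : ∀ c : ℝ, 0 ≤ c → ∀ x ∈ K, c • x ∈ K)
    (hKpointed : ∀ x ∈ K, -x ∈ K → x = 0)
    -- normality of the order
    (hnormal : ∃ l : ℝ, 0 < l ∧ ∀ x y : X, x ∈ K → y - x ∈ K → ‖x‖ ≤ l * ‖y‖)
    -- D is a nonempty closed bi-inductive subset of X
    (D : Set X) (hDne : D.Nonempty) (hDclosed : IsClosed D)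
    (hDbiInd : ∀ C ⊆ D, C.Nonempty → IsChain (coneLe K) C →
      (∃ b ∈ D, ∀ c ∈ C, coneLe K c b) ∧ (∃ a ∈ D, ∀ c ∈ C, coneLe K a c))
    -- T has nonempty closed bounded values contained in D
    (T : X → Set X)
    (hTval : ∀ x ∈ D, (T x).Nonempty ∧ IsClosed (T x) ∧ Bornology.IsBounded (T x) ∧ T x ⊆ D)
    -- T is isotone (≼-increasing upward)
    (hiso : ∀ x ∈ D, ∀ y ∈ D, coneLe K x y → ∀ z ∈ T x, ∃ w ∈ T y, coneLe K z w)
    -- T is δ-continuous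
    (hTcont : ∀ (u : ℕ → X) (p : X), (∀ n, u n ∈ D) → p ∈ D →
      Filter.Tendsto u Filter.atTop (nhds p) →
      Filter.Tendsto (fun n => Metric.hausdorffDist (T (u n)) (T p)) Filter.atTop (nhds 0))
    -- T maps bounded sets into relatively compact sets
    (hTcomp : ∀ C ⊆ D, Bornology.IsBounded C → IsCompact (closure (⋃ x ∈ C, T x)))
    -- starting points
    (x₀ : X) (hx₀ : x₀ ∈ D) (x₁ : X) (hx₁ : x₁ ∈ T x₀) (h₀₁ : coneLe K x₀ x₁) :
    ({x | x ∈ D ∧ x ∈ T x}).Nonempty ∧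
    (∀ C ⊆ {x | x ∈ D ∧ x ∈ T x}, C.Nonempty → IsChain (coneLe K) C →
      (∃ b, ∀ c ∈ C, coneLe K c b) → (∃ a, ∀ c ∈ C, coneLe K a c) →
      (∃ s, s ∈ {x | x ∈ D ∧ x ∈ T x} ∧ (∀ c ∈ C, coneLe K c s) ∧
        ∀ b, (∀ c ∈ C, coneLe K c b) → coneLe K s b) ∧
      (∃ i, i ∈ {x | x ∈ D ∧ x ∈ T x} ∧ (∀ c ∈ C, coneLe K i c) ∧
        ∀ a, (∀ c ∈ C, coneLe K a c) → coneLe K a i)) ∧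
    (∃ m, m ∈ {x | x ∈ D ∧ x ∈ T x} ∧
      ∀ y ∈ {x | x ∈ D ∧ x ∈ T x}, coneLe K m y → m = y) ∧
    (∃ m', m' ∈ {x | x ∈ D ∧ x ∈ T x} ∧
      ∀ y ∈ {x | x ∈ D ∧ x ∈ T x}, coneLe K y m' → m' = y) := by
  obtain ⟨l, hl, hnorm⟩ := id hnormal
  -- ### Part 1: a fixed point exists
  have step : ∀ q : X × X, ∃ w : X,
      q.1 ∈ D → q.2 ∈ T q.1 → coneLe K q.1 q.2 → (w ∈ T q.2 ∧ coneLe K q.2 w) := by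
    intro q
    by_cases h : q.1 ∈ D ∧ q.2 ∈ T q.1 ∧ coneLe K q.1 q.2
    · obtain ⟨h1, h2, h3⟩ := h
      have h2D : q.2 ∈ D := (hTval _ h1).2.2.2 h2
      obtain ⟨w, hw1, hw2⟩ := hiso q.1 h1 q.2 h2D h3 q.2 h2
      exact ⟨w, fun _ _ _ => ⟨hw1, hw2⟩⟩
    · exact ⟨0, fun h1 h2 h3 => absurd ⟨h1, h2, h3⟩ h⟩
  choose f hf using step
  set g : ℕ → X × X := fun n => Nat.rec (x₀, x₁) (fun _ q => (q.2, f q)) n with hg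
  have hgs : ∀ n, g (n + 1) = ((g n).2, f (g n)) := fun n => rfl
  have hinv : ∀ n, (g n).1 ∈ D ∧ (g n).2 ∈ T (g n).1 ∧ coneLe K (g n).1 (g n).2 := by
    intro n; induction n with
    | zero => exact ⟨hx₀, hx₁, h₀₁⟩
    | succ n ih =>
      obtain ⟨h1, h2, h3⟩ := ih
      have h2D : (g n).2 ∈ D := (hTval _ h1).2.2.2 h2
      have hfn := hf (g n) h1 h2 h3
      rw [hgs n]
      exact ⟨h2D, hfn.1, hfn.2⟩
  set u : ℕ → X := fun n => (g n).1 with hudef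
  have hustep : ∀ n, u (n + 1) = (g n).2 := fun n => rfl
  have hu : ∀ n, u n ∈ D := fun n => (hinv n).1
  have hTu : ∀ n, u (n + 1) ∈ T (u n) := fun n => (hustep n) ▸ (hinv n).2.1
  have hule : ∀ n, coneLe K (u n) (u (n + 1)) := fun n => (hustep n) ▸ (hinv n).2.2
  have humono := coneLe_mono_of_step hK0 hKadd hule
  have hrange : Set.range u ⊆ D := by rintro x ⟨n, rfl⟩; exact hu n
  have hrchain : IsChain (coneLe K) (Set.range u) := by
    rintro x ⟨m, rfl⟩ y ⟨n, rfl⟩ hne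
    rcases le_total m n with h | h
    · exact Or.inl (humono m n h)
    · exact Or.inr (humono n m h)
  obtain ⟨⟨b, hbD, hb⟩, -⟩ := hDbiInd (Set.range u) hrange ⟨u 0, 0, rfl⟩ hrchain
  have hbound : Bornology.IsBounded (Set.range u) := by
    have hsub : Set.range u ⊆ Metric.closedBall (u 0) (l * ‖b - u 0‖) := by
      rintro x ⟨n, rfl⟩
      rw [Metric.mem_closedBall, dist_eq_norm]
      exact hnorm (u n - u 0) (b - u 0) (humono 0 n (Nat.zero_le n))
        (by simpa [coneLe, sub_sub_sub_cancel_right] using hb (u n) ⟨n, rfl⟩)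
    exact Metric.isBounded_closedBall.subset hsub
  have hcompU := hTcomp (Set.range u) hrange hbound
  have hvmem : ∀ n, u (n + 1) ∈ ⋃ x ∈ Set.range u, T x := fun n =>
    Set.mem_biUnion ⟨n, rfl⟩ (hTu n)
  obtain ⟨p, hpl, -⟩ := mono_tendsto hKclosed hnormal hcompU (fun n => u (n + 1))
    hvmem (fun m n h => humono (m + 1) (n + 1) (by omega))
  have hpD : p ∈ D := hDclosed.mem_of_tendsto hpl
    (Filter.Eventually.of_forall fun n => hu (n + 1))
  have hpT : p ∈ T p := by
    refine mem_T_of_tendsto hTval hTcont (u := fun n => u (n + 1))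
      (v := fun n => u (n + 2)) (fun n => hu (n + 1)) hpD hpl (fun n => hTu (n + 1)) ?_
    exact hpl.comp (Filter.tendsto_add_atTop_nat 1)
  have hFp : p ∈ {x | x ∈ D ∧ x ∈ T x} := ⟨hpD, hpT⟩
  -- ### Part 2: bounded chains of fixed points have lubs and glbs in the fixed point set
  have claim2 : ∀ C ⊆ {x | x ∈ D ∧ x ∈ T x}, C.Nonempty → IsChain (coneLe K) C →
      (∃ b, ∀ c ∈ C, coneLe K c b) → (∃ a, ∀ c ∈ C, coneLe K a c) →
      (∃ s, s ∈ {x | x ∈ D ∧ x ∈ T x} ∧ (∀ c ∈ C, coneLe K c s) ∧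
        ∀ b, (∀ c ∈ C, coneLe K c b) → coneLe K s b) ∧
      (∃ i, i ∈ {x | x ∈ D ∧ x ∈ T x} ∧ (∀ c ∈ C, coneLe K i c) ∧
        ∀ a, (∀ c ∈ C, coneLe K a c) → coneLe K a i) := by
    rintro C hCsub hCne hchain ⟨b', hb'⟩ ⟨a', ha'⟩
    have hCD : C ⊆ D := fun x hx => (hCsub hx).1
    have hbound : Bornology.IsBounded C := by
      have hsub : C ⊆ Metric.closedBall a' (l * ‖b' - a'‖) := by
        intro x hx
        rw [Metric.mem_closedBall, dist_eq_norm]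
        exact hnorm (x - a') (b' - a') (ha' x hx)
          (by simpa [coneLe, sub_sub_sub_cancel_right] using hb' x hx)
      exact Metric.isBounded_closedBall.subset hsub
    have hcompC := hTcomp C hCD hbound
    constructor
    · obtain ⟨s, h1, h2, h3, h4⟩ := chain_sup hKclosed hK0 hKadd hnormal hDclosed hTval
        hTcont hCsub hCne hchain hcompC
      exact ⟨s, ⟨h1, h2⟩, h3, h4⟩
    · have hK'closed : IsClosed (-K) := hKclosed.neg
      have hK'0 : (0 : X) ∈ -K := by simpa using hK0
      have hK'add : ∀ x ∈ (-K), ∀ y ∈ (-K), x + y ∈ (-K) := by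
        intro x hx y hy
        simp only [Set.mem_neg] at *
        simpa [neg_add, add_comm] using hKadd _ hx _ hy
      have hK'normal : ∃ l' : ℝ, 0 < l' ∧ ∀ x y : X, x ∈ (-K) → y - x ∈ (-K) →
          ‖x‖ ≤ l' * ‖y‖ := by
        refine ⟨l, hl, fun x y hx hxy => ?_⟩
        simp only [Set.mem_neg, neg_sub] at hx hxy
        have := hnorm (-x) (-y) hx (by rw [show -y - -x = x - y by abel]; exact hxy)
        simpa using this
      have hchain' : IsChain (coneLe (-K)) C := fun x hx y hy hne =>
        (hchain hy hx (Ne.symm hne)).imp coneLe_neg.mpr coneLe_neg.mpr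
      obtain ⟨i, h1, h2, h3, h4⟩ := chain_sup hK'closed hK'0 hK'add hK'normal hDclosed
        hTval hTcont hCsub hCne hchain' hcompC
      exact ⟨i, ⟨h1, h2⟩, fun x hx => coneLe_neg.mp (h3 x hx),
        fun a'' ha'' => coneLe_neg.mp (h4 a'' fun x hx => coneLe_neg.mpr (ha'' x hx))⟩
  refine ⟨⟨p, hFp⟩, claim2, ?_, ?_⟩
  -- ### Part 3: maximal fixed point
  · have hzorn : ∃ m : {x : X // x ∈ D ∧ x ∈ T x},
        ∀ a : {x : X // x ∈ D ∧ x ∈ T x}, coneLe K m.1 a.1 → coneLe K a.1 m.1 := by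
      refine exists_maximal_of_chains_bounded
        (r := fun a b : {x : X // x ∈ D ∧ x ∈ T x} => coneLe K a.1 b.1) ?_
        (fun h1 h2 => coneLe_trans hKadd h1 h2)
      intro cs hcs
      rcases Set.eq_empty_or_nonempty cs with rfl | hne
      · exact ⟨⟨p, hpD, hpT⟩, by simp⟩
      · have hC'sub : (Subtype.val '' cs) ⊆ {x | x ∈ D ∧ x ∈ T x} := by
          rintro x ⟨a, _, rfl⟩; exact a.2
        have hC'ne : (Subtype.val '' cs).Nonempty := hne.image _
        have hC'chain : IsChain (coneLe K) (Subtype.val '' cs) := by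
          rintro x ⟨a, ha, rfl⟩ y ⟨c, hc, rfl⟩ hne'
          exact hcs ha hc fun h => hne' (congrArg Subtype.val h)
        obtain ⟨⟨b1, _, hbub⟩, ⟨a1, _, halb⟩⟩ := hDbiInd (Subtype.val '' cs)
          (fun x hx => (hC'sub hx).1) hC'ne hC'chain
        obtain ⟨⟨s, hs, hsub', -⟩, -⟩ := claim2 (Subtype.val '' cs) hC'sub hC'ne hC'chain
          ⟨b1, hbub⟩ ⟨a1, halb⟩
        exact ⟨⟨s, hs⟩, fun x hx => hsub' x.1 ⟨x, hx, rfl⟩⟩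
    obtain ⟨m, hm⟩ := hzorn
    refine ⟨m.1, m.2, fun y hy hle => ?_⟩
    have h2 := hm ⟨y, hy⟩ hle
    have h0 := hKpointed (y - m.1) hle (by simpa [coneLe, neg_sub] using h2)
    exact (sub_eq_zero.mp h0).symm
  -- ### Part 3': minimal fixed point
  · have hzorn : ∃ m : {x : X // x ∈ D ∧ x ∈ T x},
        ∀ a : {x : X // x ∈ D ∧ x ∈ T x}, coneLe K a.1 m.1 → coneLe K m.1 a.1 := by
      refine exists_maximal_of_chains_bounded
        (r := fun a b : {x : X // x ∈ D ∧ x ∈ T x} => coneLe K b.1 a.1) ?_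
        (fun h1 h2 => coneLe_trans hKadd h2 h1)
      intro cs hcs
      rcases Set.eq_empty_or_nonempty cs with rfl | hne
      · exact ⟨⟨p, hpD, hpT⟩, by simp⟩
      · have hC'sub : (Subtype.val '' cs) ⊆ {x | x ∈ D ∧ x ∈ T x} := by
          rintro x ⟨a, _, rfl⟩; exact a.2
        have hC'ne : (Subtype.val '' cs).Nonempty := hne.image _
        have hC'chain : IsChain (coneLe K) (Subtype.val '' cs) := by
          rintro x ⟨a, ha, rfl⟩ y ⟨c, hc, rfl⟩ hne'
          exact (hcs ha hc fun h => hne' (congrArg Subtype.val h)).symm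
        obtain ⟨⟨b1, _, hbub⟩, ⟨a1, _, halb⟩⟩ := hDbiInd (Subtype.val '' cs)
          (fun x hx => (hC'sub hx).1) hC'ne hC'chain
        obtain ⟨-, ⟨i, hi, hilb, -⟩⟩ := claim2 (Subtype.val '' cs) hC'sub hC'ne hC'chain
          ⟨b1, hbub⟩ ⟨a1, halb⟩
        exact ⟨⟨i, hi⟩, fun x hx => hilb x.1 ⟨x, hx, rfl⟩⟩
    obtain ⟨m, hm⟩ := hzorn
    refine ⟨m.1, m.2, fun y hy hle => ?_⟩
    have h2 := hm ⟨y, hy⟩ hle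
    have h0 := hKpointed (y - m.1) h2 (by simpa [coneLe, neg_sub] using hle)
    exact (sub_eq_zero.mp h0).symm
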